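/- Let A and B be C*-algebras with A unital, let u be a unitary element of A, and let T : A → B be a bounded linear map which is a *-homomorphism at u. Then T(u) is a partial isometry in B (T(u) T(u)* T(u) = T(u)), and T(u)* T(u) = T(u) T(u)* = T(1). -/

import Mathlib

open NormedSpace

section Helpers

variable {A B : Type*}
    [NormedRing A] [StarRing A] [CStarRing A] [CompleteSpace A]
    [NormedAlgebra ℂ A] [StarModule ℂ A]
    [NonUnitalNormedRing B] [StarRing B] [CStarRing B] [CompleteSpace B]
    [NormedSpace ℂ B] [IsScalarTower ℂ B B] [SMulCommClass ℂ B B] [StarModule ℂ B]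

set_option linter.unusedSectionVars false

lemma my_mul_deriv (f g : ℝ → B) (f' g' : B) (y : B)
    (hf : HasDerivAt f f' 0) (hg : HasDerivAt g g' 0)
    (hc : ∀ t, f t * g t = y) :
    f' * g 0 + f 0 * g' = 0 := by
  have hb := (ContinuousLinearMap.mul ℝ B).isBoundedBilinearMap
  have h1 : HasDerivAt (fun t => f t * g t) (f' * g 0 + f 0 * g') 0 := by
    have := (hb.hasFDerivAt (f 0, g 0)).comp_hasDerivAt 0 (hf.prodMk hg)
    convert this using 1
    · rfl
    · rfl
    simp [IsBoundedBilinearMap.deriv_apply, add_comm]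
  have h2 : HasDerivAt (fun t => f t * g t) 0 0 := by
    simp only [hc]; exact hasDerivAt_const 0 y
  exact h1.unique h2

lemma my_path_hasDerivAt (m : A) : HasDerivAt (fun t : ℝ => exp (t • m)) m 0 := by
  simpa using hasDerivAt_exp_smul_const (𝕂 := ℝ) m 0

lemma my_path_unitary (m : A) (hm : star m = -m) (t : ℝ) :
    exp (t • m) * star (exp (t • m)) = 1 ∧ star (exp (t • m)) * exp (t • m) = 1 := by
  have hmem : (t • m) ∈ skewAdjoint A := by
    rw [skewAdjoint.mem_iff, star_smul, hm]; simp
  let +nondep : NormedAlgebra ℚ A := .restrictScalars ℚ ℂ A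
  have hu := exp_mem_unitary_of_mem_skewAdjoint hmem
  rw [Unitary.mem_iff] at hu
  exact ⟨hu.2, hu.1⟩

lemma my_Thd (T' : A →L[ℂ] B) {f : ℝ → A} {f' : A} (hf : HasDerivAt f f' 0) :
    HasDerivAt (fun t => T' (f t)) (T' f') 0 :=
  (T'.restrictScalars ℝ).hasFDerivAt.comp_hasDerivAt 0 hf

lemma my_I_smul_cancel {x y : B} (h9 : Complex.I • x = Complex.I • y) : x = y := by
  have h10 := congrArg (fun z => (Complex.I)⁻¹ • z) h9
  simpa [smul_smul, inv_mul_cancel₀ Complex.I_ne_zero] using h10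

/-- Extend an equality of two `ℂ`-linear expressions from skew-adjoint elements
to all elements. -/
lemma my_skew_sa_ext (Φ Ψ : A → B)
    (hΦa : ∀ x y : A, Φ (x + y) = Φ x + Φ y) (hΦs : ∀ (r : ℂ) (x : A), Φ (r • x) = r • Φ x)
    (hΨa : ∀ x y : A, Ψ (x + y) = Ψ x + Ψ y) (hΨs : ∀ (r : ℂ) (x : A), Ψ (r • x) = r • Ψ x)
    (hk : ∀ m : A, star m = -m → Φ m = Ψ m) : ∀ x : A, Φ x = Ψ x := by
  have sa : ∀ s : A, star s = s → Φ s = Ψ s := by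
    intro s hs
    have h1 := hk (Complex.I • s)
      (by rw [star_smul, hs, Complex.star_def, Complex.conj_I, neg_smul])
    rw [hΦs, hΨs] at h1
    exact my_I_smul_cancel h1
  intro x
  have hhalf : star (2⁻¹ : ℂ) = (2⁻¹ : ℂ) := by
    rw [Complex.star_def]
    exact Complex.conj_eq_iff_im.mpr (by norm_num)
  have hs1 : star ((2⁻¹ : ℂ) • (x + star x)) = (2⁻¹ : ℂ) • (x + star x) := by
    rw [star_smul, star_add, star_star, hhalf, add_comm]
  have hm1 : star ((2⁻¹ : ℂ) • (x - star x)) = -((2⁻¹ : ℂ) • (x - star x)) := by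
    rw [star_smul, star_sub, star_star, hhalf, ← smul_neg, neg_sub]
  have hx : (2⁻¹ : ℂ) • (x + star x) + (2⁻¹ : ℂ) • (x - star x) = x := by
    rw [← smul_add]
    have h2 : (x + star x) + (x - star x) = (2 : ℂ) • x := by
      rw [two_smul]; abel
    rw [h2, smul_smul]
    norm_num
  calc Φ x = Φ ((2⁻¹ : ℂ) • (x + star x)) + Φ ((2⁻¹ : ℂ) • (x - star x)) := by
        rw [← hΦa, hx]
    _ = Ψ ((2⁻¹ : ℂ) • (x + star x)) + Ψ ((2⁻¹ : ℂ) • (x - star x)) := by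
        rw [sa _ hs1, hk _ hm1]
    _ = Ψ x := by rw [← hΨa, hx]

lemma my_assoc4 (w x y z : B) : (w * x) * (y * z) = w * ((x * y) * z) := by
  rw [mul_assoc, ← mul_assoc x]

end Helpers

/-- A map `T` between C*-algebras is a `*`-homomorphism at the point `z` if
`a * b* = z` implies `T (a * b*) = T a * (T b)* = T z` and
`c* * d = z` implies `T (c* * d) = (T c)* * T d = T z`. -/
def IsStarHomAt {A B : Type*} [Mul A] [Star A] [Mul B] [Star B]
    (T : A → B) (z : A) : Prop :=
  (∀ a b : A, a * star b = z →
      T (a * star b) = T a * star (T b) ∧ T a * star (T b) = T z) ∧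
  (∀ c d : A, star c * d = z →
      T (star c * d) = star (T c) * T d ∧ star (T c) * T d = T z)

theorem stmt15 {A B : Type*}
    [NormedRing A] [StarRing A] [CStarRing A] [CompleteSpace A]
    [NormedAlgebra ℂ A] [StarModule ℂ A]
    [NonUnitalNormedRing B] [StarRing B] [CStarRing B] [CompleteSpace B]
    [NormedSpace ℂ B] [IsScalarTower ℂ B B] [SMulCommClass ℂ B B] [StarModule ℂ B]
    (u : A) (hu1 : u * star u = 1) (hu2 : star u * u = 1)
    (T : A →L[ℂ] B)
    (h : IsStarHomAt (⇑T) u) :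
    T u * star (T u) * T u = T u ∧
    star (T u) * T u = T 1 ∧
    T u * star (T u) = T 1 := by
  -- direct consequences of the hypothesis
  have D1 : T u * star (T 1) = T u := by
    have := (h.1 u 1 (by simp)).2
    simpa using this
  have D2 : star (T 1) * T u = T u := by
    have := (h.2 1 u (by simp)).2
    simpa using this
  have D3 : T 1 * star (T (star u)) = T u := by
    have := (h.1 1 (star u) (by simp)).2
    simpa using this
  -- derivative consequences, for skew-adjoint m
  have K1 : ∀ m : A, star m = -m →
      T (u * m) * star (T 1) + T u * star (T m) = 0 := by
    intro m hm
    have hw := my_path_hasDerivAt m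
    have hf : HasDerivAt (fun t : ℝ => T (u * exp (t • m))) (T (u * m)) 0 :=
      my_Thd T (hw.const_mul u)
    have hg : HasDerivAt (fun t : ℝ => star (T (exp (t • m)))) (star (T m)) 0 :=
      (my_Thd T hw).star
    have hc : ∀ t : ℝ, T (u * exp (t • m)) * star (T (exp (t • m))) = T u := by
      intro t
      exact (h.1 (u * exp (t • m)) (exp (t • m))
        (by rw [mul_assoc, (my_path_unitary m hm t).1, mul_one])).2
    have h0 := my_mul_deriv _ _ _ _ _ hf hg hc
    simpa using h0
  have K2 : ∀ m : A, star m = -m →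
      star (T m) * T u + star (T 1) * T (m * u) = 0 := by
    intro m hm
    have hw := my_path_hasDerivAt m
    have hf : HasDerivAt (fun t : ℝ => star (T (exp (t • m)))) (star (T m)) 0 :=
      (my_Thd T hw).star
    have hg : HasDerivAt (fun t : ℝ => T (exp (t • m) * u)) (T (m * u)) 0 :=
      my_Thd T (hw.mul_const u)
    have hc : ∀ t : ℝ, star (T (exp (t • m))) * T (exp (t • m) * u) = T u := by
      intro t
      exact (h.2 (exp (t • m)) (exp (t • m) * u)
        (by rw [← mul_assoc, (my_path_unitary m hm t).2, one_mul])).2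
    have h0 := my_mul_deriv _ _ _ _ _ hf hg hc
    simpa using h0
  have K3 : ∀ m : A, star m = -m →
      T m * star (T (star u)) + T 1 * star (T (star u * m)) = 0 := by
    intro m hm
    have hw := my_path_hasDerivAt m
    have hf : HasDerivAt (fun t : ℝ => T (exp (t • m))) (T m) 0 := my_Thd T hw
    have hg : HasDerivAt (fun t : ℝ => star (T (star u * exp (t • m))))
        (star (T (star u * m))) 0 := (my_Thd T (hw.const_mul (star u))).star
    have hc : ∀ t : ℝ, T (exp (t • m)) * star (T (star u * exp (t • m))) = T u := by
      intro t
      refine (h.1 (exp (t • m)) (star u * exp (t • m)) ?_).2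
      rw [star_mul, star_star, ← mul_assoc, (my_path_unitary m hm t).1, one_mul]
    have h0 := my_mul_deriv _ _ _ _ _ hf hg hc
    simpa using h0
  have K4 : ∀ m : A, star m = -m →
      star (T (m * star u)) * T 1 + star (T (star u)) * T m = 0 := by
    intro m hm
    have hw := my_path_hasDerivAt m
    have hf : HasDerivAt (fun t : ℝ => star (T (exp (t • m) * star u)))
        (star (T (m * star u))) 0 := (my_Thd T (hw.mul_const (star u))).star
    have hg : HasDerivAt (fun t : ℝ => T (exp (t • m))) (T m) 0 := my_Thd T hw
    have hc : ∀ t : ℝ, star (T (exp (t • m) * star u)) * T (exp (t • m)) = T u := by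
      intro t
      refine (h.2 (exp (t • m) * star u) (exp (t • m)) ?_).2
      rw [star_mul, star_star, mul_assoc, (my_path_unitary m hm t).2, mul_one]
    have h0 := my_mul_deriv _ _ _ _ _ hf hg hc
    simpa using h0
  -- extend to all elements
  have G1 : ∀ x : A, T (u * x) * star (T 1) = T u * star (T (star x)) := by
    refine my_skew_sa_ext (fun x => T (u * x) * star (T 1))
      (fun x => T u * star (T (star x))) ?_ ?_ ?_ ?_ ?_
    · intro x y; simp only [mul_add, map_add, add_mul]
    · intro r x; simp only [mul_smul_comm, map_smul, smul_mul_assoc]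
    · intro x y; simp only [star_add, map_add, mul_add]
    · intro r x
      simp only [star_smul, map_smul, star_star, mul_smul_comm]
    · intro m hm
      have hk := K1 m hm
      show T (u * m) * star (T 1) = T u * star (T (star m))
      rw [hm, map_neg, star_neg, mul_neg]
      exact eq_neg_of_add_eq_zero_left hk
  have G2 : ∀ x : A, star (T 1) * T (x * u) = star (T (star x)) * T u := by
    refine my_skew_sa_ext (fun x => star (T 1) * T (x * u))
      (fun x => star (T (star x)) * T u) ?_ ?_ ?_ ?_ ?_
    · intro x y; simp only [add_mul, map_add, mul_add]
    · intro r x; simp only [smul_mul_assoc, map_smul, mul_smul_comm]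
    · intro x y; simp only [star_add, map_add, add_mul]
    · intro r x
      simp only [star_smul, map_smul, star_star, smul_mul_assoc]
    · intro m hm
      have hk := K2 m hm
      show star (T 1) * T (m * u) = star (T (star m)) * T u
      rw [hm, map_neg, star_neg, neg_mul]
      exact eq_neg_of_add_eq_zero_right hk
  have G3 : ∀ x : A, T x * star (T (star u)) = T 1 * star (T (star u * star x)) := by
    refine my_skew_sa_ext (fun x => T x * star (T (star u)))
      (fun x => T 1 * star (T (star u * star x))) ?_ ?_ ?_ ?_ ?_
    · intro x y; simp only [map_add, add_mul]
    · intro r x; simp only [map_smul, smul_mul_assoc]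
    · intro x y; simp only [star_add, mul_add, map_add]
    · intro r x
      simp only [star_smul, mul_smul_comm, map_smul, star_star]
    · intro m hm
      have hk := K3 m hm
      show T m * star (T (star u)) = T 1 * star (T (star u * star m))
      rw [hm, mul_neg, map_neg, star_neg, mul_neg]
      exact eq_neg_of_add_eq_zero_left hk
  have G4 : ∀ x : A, star (T (star x * star u)) * T 1 = star (T (star u)) * T x := by
    refine my_skew_sa_ext (fun x => star (T (star x * star u)) * T 1)
      (fun x => star (T (star u)) * T x) ?_ ?_ ?_ ?_ ?_
    · intro x y; simp only [star_add, add_mul, map_add]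
    · intro r x
      simp only [star_smul, smul_mul_assoc, map_smul, star_star]
    · intro x y; simp only [map_add, mul_add]
    · intro r x; simp only [map_smul, mul_smul_comm]
    · intro m hm
      have hk := K4 m hm
      show star (T (star m * star u)) * T 1 = star (T (star u)) * T m
      rw [hm, neg_mul, map_neg, star_neg, neg_mul]
      exact neg_eq_of_add_eq_zero_right hk
  -- the four key identities
  have E1 : T 1 * star (T 1) = T u * star (T u) := by
    have := G1 (star u)
    rwa [hu1, star_star] at this
  have E2 : star (T 1) * T 1 = star (T u) * T u := by
    have := G2 (star u)
    rwa [hu2, star_star] at this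
  have E3 : T (star u) * star (T (star u)) = T 1 * star (T 1) := by
    have := G3 (star u)
    rwa [star_star, hu2] at this
  have E4 : star (T 1) * T 1 = star (T (star u)) * T (star u) := by
    have := G4 (star u)
    rwa [star_star, hu1] at this
  -- algebraic endgame
  have D1' : T 1 * star (T u) = star (T u) := by
    have := congrArg star D1
    rwa [star_mul, star_star] at this
  have hstar_a : T (star u) * star (T 1) = star (T u) := by
    have := congrArg star D3
    rwa [star_mul, star_star] at this
  have P1 : (T u * star (T u)) * (T u * star (T u)) = T u * star (T u) := by
    calc (T u * star (T u)) * (T u * star (T u))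
        = T u * ((star (T u) * T u) * star (T u)) := my_assoc4 _ _ _ _
      _ = T u * ((star (T 1) * T 1) * star (T u)) := by rw [← E2]
      _ = (T u * star (T 1)) * (T 1 * star (T u)) := (my_assoc4 _ _ _ _).symm
      _ = T u * star (T u) := by rw [D1, D1']
  have P2 : star (T u) * T u = T 1 * star (T 1) := by
    calc star (T u) * T u
        = (T (star u) * star (T 1)) * (T 1 * star (T (star u))) := by rw [hstar_a, D3]
      _ = T (star u) * ((star (T 1) * T 1) * star (T (star u))) := my_assoc4 _ _ _ _
      _ = T (star u) * ((star (T (star u)) * T (star u)) * star (T (star u))) := by rw [E4]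
      _ = (T (star u) * star (T (star u))) * (T (star u) * star (T (star u))) :=
          (my_assoc4 _ _ _ _).symm
      _ = (T 1 * star (T 1)) * (T 1 * star (T 1)) := by rw [E3]
      _ = (T u * star (T u)) * (T u * star (T u)) := by rw [E1]
      _ = T u * star (T u) := P1
      _ = T 1 * star (T 1) := E1.symm
  have P2' : star (T u) * T u = T u * star (T u) := by rw [P2, E1]
  have hp_idem : (star (T u) * T u) * (star (T u) * T u) = star (T u) * T u := by
    rw [P2']; exact P1
  have hz : (T 1 - star (T u) * T u) * star (T 1 - star (T u) * T u) = 0 := by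
    rw [star_sub, star_mul, star_star, mul_sub, sub_mul, sub_mul]
    have h1 : T 1 * star (T 1) = star (T u) * T u := P2.symm
    have h2 : (star (T u) * T u) * star (T 1) = star (T u) * T u := by rw [mul_assoc, D1]
    have h3 : T 1 * (star (T u) * T u) = star (T u) * T u := by rw [← mul_assoc, D1']
    rw [h1, h2, h3, hp_idem]
    simp
  have hze : T 1 = star (T u) * T u := by
    have hnorm : ‖T 1 - star (T u) * T u‖ * ‖T 1 - star (T u) * T u‖ = 0 := by
      rw [← CStarRing.norm_self_mul_star, hz, norm_zero]
    have h5 : T 1 - star (T u) * T u = 0 := by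
      rw [← norm_eq_zero]
      exact mul_self_eq_zero.mp hnorm
    exact sub_eq_zero.mp h5
  have hT1sa : star (T 1) = T 1 := by
    rw [hze, star_mul, star_star]
  have g3 : T u * star (T u) = T 1 := by
    rw [← P2']; exact hze.symm
  refine ⟨?_, hze.symm, g3⟩
  rw [g3, ← hT1sa, D2]
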